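/- Let A be a PD_3 algebra over an algebraically closed field k of characteristic ≠ 2 with dim_k A^1 ≥ 4, and let ν be the nullity of μ_A (the maximal dimension of a 2-singular subspace of A^1). Then ν ≥ 2 and the resonance variety R^1_{ν-1}(A) contains a linear subspace of dimension ν; in particular dim R^1_{ν-1}(A) ≥ ν. -/

import Mathlib

open Module LinearMap

/-- The differential `δ_a^i : A^i → A^{i+1}`, left multiplication by `a ∈ A^1`. -/
def gdelta {K R : Type*} [Field K] [Ring R] [Algebra K R]
    (𝒜 : ℕ → Submodule K R) [GradedRing 𝒜] (a : 𝒜 1) (i : ℕ) :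
    𝒜 i →ₗ[K] 𝒜 (i + 1) where
  toFun u := ⟨(a : R) * (u : R), by
    simpa [add_comm] using SetLike.mul_mem_graded a.2 u.2⟩
  map_add' u v := by ext; simp [mul_add]
  map_smul' c u := by ext; simp [mul_smul_comm]

/-- `dim H^i(A, δ_a)`: the dimension of the degree-`i` cohomology of `(A, δ_a)`. -/
noncomputable def hdim {K R : Type*} [Field K] [Ring R] [Algebra K R]
    (𝒜 : ℕ → Submodule K R) [GradedRing 𝒜] (a : 𝒜 1) : ℕ → ℕ
  | 0 => finrank K (LinearMap.ker (gdelta 𝒜 a 0))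
  | (i + 1) => finrank K (LinearMap.ker (gdelta 𝒜 a (i + 1)))
      - finrank K (LinearMap.range (gdelta 𝒜 a i))

/-- The resonance variety `R^i_k(A) ⊆ A^1`. -/
noncomputable def resSet {K R : Type*} [Field K] [Ring R] [Algebra K R]
    (𝒜 : ℕ → Submodule K R) [GradedRing 𝒜] (i k : ℕ) : Set (𝒜 1) :=
  {a | k ≤ hdim 𝒜 a i}


open Matrix MvPolynomial

set_option linter.unusedSectionVars false


section LemmaA
variable {K : Type*} [Field K]

/-- If the kernel of `mulVec M` is contained in a line, then `adjugate M ≠ 0`. -/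
lemma adjugate_ne_zero_of_ker_le_line {n : ℕ} (hn : 1 ≤ n)
    (M : Matrix (Fin n) (Fin n) K) (u : Fin n → K) (hu : u ≠ 0)
    (hker : ∀ v, M *ᵥ v = 0 → ∃ c : K, v = c • u) :
    adjugate M ≠ 0 := by
  intro h0
  by_cases hdet : M.det = 0
  · obtain ⟨v, hv0, hvk⟩ := (Matrix.exists_mulVec_eq_zero_iff).mpr hdet
    obtain ⟨c, rfl⟩ := hker v hvk
    have hc : c ≠ 0 := by rintro rfl; simp at hv0
    have hMu : M *ᵥ u = 0 := by
      rw [Matrix.mulVec_smul] at hvk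
      have := congrArg (fun w => c⁻¹ • w) hvk
      simpa [smul_smul, inv_mul_cancel₀ hc] using this
    obtain ⟨i₀, hi₀⟩ : ∃ i, u i ≠ 0 := Function.ne_iff.mp hu
    have hukn : u ∈ LinearMap.ker M.mulVecLin := by simpa [Matrix.mulVecLin_apply] using hMu
    have hrange : LinearMap.range M.mulVecLin ≠ ⊤ := by
      intro htop
      have hsurj : Function.Surjective M.mulVecLin := LinearMap.range_eq_top.mp htop
      have hinj : Function.Injective M.mulVecLin :=
        (LinearMap.injective_iff_surjective).mpr hsurj
      apply hu
      have : M.mulVecLin u = M.mulVecLin 0 := by simpa using hMu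
      exact hinj this
    obtain ⟨b, -, hb⟩ := SetLike.exists_of_lt
      (lt_top_iff_ne_top.mpr hrange : LinearMap.range M.mulVecLin < ⊤)
    have hdetN : (M.updateCol i₀ b).det ≠ 0 := by
      intro hN
      obtain ⟨w, hw0, hwk⟩ := (Matrix.exists_mulVec_eq_zero_iff).mpr hN
      set w' : Fin n → K := Function.update w i₀ 0 with hw'
      have hw'i : w' i₀ = 0 := by simp [hw']
      have hNw' : M.updateCol i₀ b *ᵥ w' = M *ᵥ w' := by
        funext i
        simp only [Matrix.mulVec, dotProduct]
        refine Finset.sum_congr rfl fun j _ => ?_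
        by_cases h : j = i₀
        · subst h; simp [hw'i]
        · simp [Matrix.updateCol_ne h]
      have hwdec : w = w' + (w i₀) • (Pi.single i₀ 1 : Fin n → K) := by
        funext j
        by_cases h : j = i₀ <;> simp [hw', h, Function.update_apply]
      have key : M *ᵥ w' + (w i₀) • b = 0 := by
        have h1 : M.updateCol i₀ b *ᵥ w = 0 := hwk
        rw [hwdec] at h1
        rw [Matrix.mulVec_add, Matrix.mulVec_smul, hNw'] at h1
        have hcol : M.updateCol i₀ b *ᵥ Pi.single i₀ 1 = b := by
          funext i
          rw [Matrix.mulVec_single]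
          simp [Matrix.updateCol_self]
        rwa [hcol] at h1
      by_cases hwi : w i₀ = 0
      · have hw'w : w' = w := by
          funext j; by_cases h : j = i₀ <;> simp [hw', h, hwi, Function.update_apply]
        rw [hw'w, hwi, zero_smul, add_zero] at key
        obtain ⟨c', rfl⟩ := hker w key
        have hc' : c' ≠ 0 := by rintro rfl; simp at hw0
        apply hi₀
        have : c' * u i₀ = 0 := hwi
        rcases mul_eq_zero.mp this with h | h
        · exact absurd h hc'
        · exact h
      · apply hb
        refine ⟨(-(w i₀))⁻¹ • w', ?_⟩
        have h3 : M *ᵥ w' = (-(w i₀)) • b := by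
          have : M *ᵥ w' = -((w i₀) • b) := by
            rw [eq_neg_iff_add_eq_zero]; exact key
          simpa [neg_smul] using this
        rw [_root_.map_smul]
        simp only [Matrix.mulVecLin_apply, h3, smul_smul,
          inv_mul_cancel₀ (neg_ne_zero.mpr hwi)]
        simp
    apply hdetN
    have hcr : Matrix.cramer M b = 0 := by
      rw [Matrix.cramer_eq_adjugate_mulVec, h0]; simp
    have := congrFun hcr i₀
    simpa [Matrix.cramer_apply] using this
  · have h1 := Matrix.mul_adjugate M
    rw [h0, Matrix.mul_zero] at h1
    set i : Fin n := ⟨0, hn⟩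
    have := congrFun (congrFun h1.symm i) i
    simp [Matrix.smul_apply, Matrix.one_apply] at this
    exact hdet this
end LemmaA


section Homog
variable {K : Type*} [Field K] {σ : Type*} [Fintype σ] [DecidableEq σ]

/-- determinant of a matrix with rows of homogeneous entries is homogeneous -/
lemma det_isHomogeneous {n : ℕ} (M : Matrix (Fin n) (Fin n) (MvPolynomial σ K))
    (d : Fin n → ℕ) (h : ∀ i j, (M i j).IsHomogeneous (d i)) :
    M.det.IsHomogeneous (∑ i, d i) := by
  rw [Matrix.det_apply]
  apply MvPolynomial.IsHomogeneous.sum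
  intro π _
  have hprod : (∏ i, M (π i) i).IsHomogeneous (∑ i, d i) := by
    have := MvPolynomial.IsHomogeneous.prod Finset.univ (fun i => M (π i) i)
      (fun i => d (π i)) (fun i _ => h (π i) i)
    rwa [Equiv.sum_comp π d] at this
  rcases Int.units_eq_one_or (Equiv.Perm.sign π) with hs | hs <;> rw [hs]
  · simpa using hprod
  · simpa using hprod.neg

lemma adjugate_entry_isHomogeneous {n : ℕ} (M : Matrix (Fin n) (Fin n) (MvPolynomial σ K))
    (h : ∀ i j, (M i j).IsHomogeneous 1) (i j : Fin n) :
    ((adjugate M) i j).IsHomogeneous (n - 1) := by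
  rw [Matrix.adjugate_apply]
  have := det_isHomogeneous (M.updateRow j (Pi.single i 1))
    (fun r => if r = j then 0 else 1) (fun r c => ?_)
  · convert this using 1
    rw [← Finset.add_sum_erase _ _ (Finset.mem_univ j), if_pos rfl,
      Finset.sum_congr rfl (fun r hr => if_neg (Finset.ne_of_mem_erase hr))]
    simp [Finset.card_erase_of_mem]
  · show ((M.updateRow j (Pi.single i 1)) r c).IsHomogeneous (if r = j then 0 else 1)
    by_cases hr : r = j
    · subst hr
      rw [Matrix.updateRow_self, if_pos rfl]
      by_cases hc : c = i
      · subst hc; rw [Pi.single_eq_same]; exact MvPolynomial.isHomogeneous_one σ K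
      · rw [Pi.single_eq_of_ne hc]
        exact MvPolynomial.isHomogeneous_zero _ _ _
    · rw [Matrix.updateRow_ne hr, if_neg hr]
      exact h r c

/-- homogeneity of a cofactor: if `f` is homogeneous, nonzero, and `f*g` is homogeneous
of degree `k + e`, then `g` is homogeneous of degree `e`. -/
lemma isHomogeneous_of_mul_left {f g : MvPolynomial σ K} {k e : ℕ}
    (hf : f.IsHomogeneous k) (hf0 : f ≠ 0)
    (hfg : (f * g).IsHomogeneous (k + e)) : g.IsHomogeneous e := by
  have hcomp : ∀ d : ℕ, d ≠ e → homogeneousComponent d g = 0 := by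
    intro d hd
    have hsum : f * g = ∑ m ∈ Finset.range (g.totalDegree + 1),
        f * homogeneousComponent m g := by
      rw [← Finset.mul_sum, sum_homogeneousComponent]
    have happ := congrArg (homogeneousComponent (k + d)) hsum
    rw [map_sum] at happ
    have hLHS : homogeneousComponent (k + d) (f * g) = 0 := by
      have hmem : f * g ∈ homogeneousSubmodule σ K (k + e) :=
        (mem_homogeneousSubmodule _ _).mpr hfg
      rw [homogeneousComponent_of_mem hmem, if_neg (by omega)]
    have hRHS : ∀ m ∈ Finset.range (g.totalDegree + 1),
        homogeneousComponent (k + d) (f * homogeneousComponent m g)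
          = if m = d then f * homogeneousComponent d g else 0 := by
      intro m _
      have hmem : f * homogeneousComponent m g ∈ homogeneousSubmodule σ K (k + m) :=
        (mem_homogeneousSubmodule _ _).mpr (hf.mul (homogeneousComponent_isHomogeneous m g))
      rw [homogeneousComponent_of_mem hmem]
      by_cases hmd : m = d
      · subst hmd; simp
      · rw [if_neg (by omega), if_neg hmd]
    rw [hLHS] at happ
    rw [Finset.sum_congr rfl hRHS] at happ
    by_cases hdr : d ∈ Finset.range (g.totalDegree + 1)
    · rw [Finset.sum_ite_eq' _ _ _, if_pos hdr] at happ
      rcases mul_eq_zero.mp happ.symm with h | h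
      · exact absurd h hf0
      · exact h
    · apply homogeneousComponent_eq_zero
      simp at hdr; omega
  have hg : g = homogeneousComponent e g := by
    conv_lhs => rw [← sum_homogeneousComponent g]
    rw [Finset.sum_eq_single e (fun b _ hb => hcomp b hb)]
    intro he
    apply homogeneousComponent_eq_zero
    simp at he; omega
  rw [hg]
  exact homogeneousComponent_isHomogeneous e g

/-- pointwise scaling of evaluation for a homogeneous polynomial -/
lemma eval_smul_of_isHomogeneous (F : MvPolynomial σ K) {d : ℕ}
    (hF : F.IsHomogeneous d) (c : K) (x : σ → K) :
    eval (c • x) F = c ^ d * eval x F := by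
  rw [eval_eq', eval_eq', Finset.mul_sum]
  apply Finset.sum_congr rfl
  intro m hm
  have hdeg : ∑ i, m i = d := by
    have h1 : (Finsupp.weight 1) m = d := hF (mem_support_iff.mp hm)
    rw [← h1]
    simp [Finsupp.weight_apply, Finsupp.sum_fintype]
  rw [← hdeg]
  have hc : ∏ i, (c • x) i ^ m i = c ^ (∑ i, m i) * ∏ i, x i ^ m i := by
    calc ∏ i, (c • x) i ^ m i = ∏ i, (c ^ m i * x i ^ m i) := by
          refine Finset.prod_congr rfl fun i _ => ?_
          simp [mul_pow]
      _ = (∏ i, c ^ m i) * ∏ i, x i ^ m i := Finset.prod_mul_distrib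
      _ = c ^ (∑ i, m i) * ∏ i, x i ^ m i := by rw [Finset.prod_pow_eq_pow_sum]
  rw [hc]; ring

end Homog


section HZ
variable {K : Type*} [Field K] [IsAlgClosed K]

lemma eval_comp_poly {n : ℕ} (F : MvPolynomial (Fin n) K)
    (g : Fin n → Polynomial K) (t : K) :
    Polynomial.eval t (eval₂ Polynomial.C g F)
      = eval (fun i => Polynomial.eval t (g i)) F := by
  apply MvPolynomial.induction_on F
  · simp
  · intro p q hp hq; simp [hp, hq]
  · intro p i hp; simp [hp]

lemma eval_comp_mv {n m : ℕ} (F : MvPolynomial (Fin n) K)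
    (g : Fin n → MvPolynomial (Fin m) K) (x : Fin m → K) :
    eval x (eval₂ MvPolynomial.C g F) = eval (fun i => eval x (g i)) F := by
  apply MvPolynomial.induction_on F
  · simp
  · intro p q hp hq; simp [hp, hq]
  · intro p i hp; simp [hp]


/-- A homogeneous polynomial of positive degree in at least two variables over an
algebraically closed field has a nontrivial zero. -/
lemma exists_nontrivial_zero {n d : ℕ} (hn : 2 ≤ n) (hd : 1 ≤ d)
    (F : MvPolynomial (Fin n) K) (hF : F.IsHomogeneous d) :
    ∃ x : Fin n → K, x ≠ 0 ∧ eval x F = 0 := by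
  have i0 : Fin n := ⟨0, by omega⟩
  by_cases hF0 : F = 0
  · refine ⟨Pi.single i0 1, ?_, by simp [hF0]⟩
    intro h
    have := congrFun h i0
    simp at this
  -- find a point where F doesn't vanish
  have hex : ∃ u : Fin n → K, eval u F ≠ 0 := by
    by_contra hc
    push_neg at hc
    exact hF0 (MvPolynomial.funext fun x => by simp [hc x])
  obtain ⟨u, hu⟩ := hex
  have hu0 : u ≠ 0 := by
    rintro rfl
    have := eval_smul_of_isHomogeneous F hF 0 0
    rw [zero_pow (by omega), zero_mul] at this
    simp only [smul_zero] at this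
    exact hu this
  -- pick v outside the line through u
  obtain ⟨v, hv⟩ : ∃ v : Fin n → K, v ∉ Submodule.span K {u} := by
    by_contra hc
    push_neg at hc
    have htop : (Submodule.span K {u} : Submodule K (Fin n → K)) = ⊤ :=
      eq_top_iff.mpr fun x _ => hc x
    have h1 : finrank K (Submodule.span K {u} : Submodule K (Fin n → K)) = 1 :=
      finrank_span_singleton hu0
    rw [htop] at h1
    simp [finrank_top, Module.finrank_pi] at h1
    omega
  set p : Polynomial K :=
    eval₂ Polynomial.C (fun i => Polynomial.C (u i) * Polynomial.X + Polynomial.C (v i)) F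
    with hp
  have hpeval : ∀ t : K, Polynomial.eval t p = eval (fun i => u i * t + v i) F := by
    intro t
    rw [hp, eval_comp_poly]
    have heq : (fun i => Polynomial.eval t
        (Polynomial.C (u i) * Polynomial.X + Polynomial.C (v i))) = fun i => u i * t + v i := by
      funext i; simp
    rw [heq]
  by_cases hdeg : p.natDegree = 0
  · have hpc := Polynomial.eq_C_of_natDegree_eq_zero hdeg
    set k := p.coeff 0 with hk
    by_cases hk0 : k = 0
    · refine ⟨v, ?_, ?_⟩
      · intro h; exact hv (h ▸ Submodule.zero_mem _)
      · have h0 := hpeval 0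
        rw [hpc] at h0
        simp only [Polynomial.eval_C, hk0] at h0
        have heq : (fun i => u i * 0 + v i) = v := by funext i; ring
        rw [heq] at h0
        exact h0.symm
    · exfalso
      -- consider the two-variable specialization
      set h2 : MvPolynomial (Fin 2) K :=
        eval₂ MvPolynomial.C
          (fun i => MvPolynomial.C (u i) * X 0 + MvPolynomial.C (v i) * X 1) F with hh2
      have h2eval : ∀ x : Fin 2 → K,
          eval x h2 = eval (fun i => u i * x 0 + v i * x 1) F := by
        intro x
        rw [hh2, eval_comp_mv]
        have heq : (fun i => eval x (MvPolynomial.C (u i) * X 0 + MvPolynomial.C (v i) * X 1))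
            = fun i => u i * x 0 + v i * x 1 := by
          funext i; simp
        rw [heq]
      set δ : MvPolynomial (Fin 2) K := h2 - MvPolynomial.C k * (X 1) ^ d with hδ
      have hδzero : δ * X 1 = 0 := by
        apply MvPolynomial.funext
        intro x
        rw [_root_.map_mul, _root_.map_zero]
        by_cases hx1 : x 1 = 0
        · rw [MvPolynomial.eval_X, hx1, mul_zero]
        · have hsc : (fun i => u i * x 0 + v i * x 1) = (x 1) • (fun i => u i * (x 0 / x 1) + v i) := by
            funext i
            simp only [Pi.smul_apply, smul_eq_mul]
            field_simp
          have heval : eval x h2 = k * (x 1) ^ d := by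
            rw [h2eval, hsc, eval_smul_of_isHomogeneous F hF]
            have := hpeval (x 0 / x 1)
            rw [hpc] at this
            simp only [Polynomial.eval_C] at this
            rw [← this]
            ring
          have hδx : eval x δ = 0 := by
            rw [hδ, map_sub, heval, _root_.map_mul, _root_.map_pow, MvPolynomial.eval_C,
              MvPolynomial.eval_X]
            ring
          rw [hδx, zero_mul]
      have hδ0 : δ = 0 := by
        rcases mul_eq_zero.mp hδzero with h | h
        · exact h
        · exact absurd h (MvPolynomial.X_ne_zero 1)
      have hh2eq : h2 = MvPolynomial.C k * (X 1) ^ d := by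
        have := sub_eq_zero.mp (hδ ▸ hδ0)
        exact this
      have hfinal : eval u F = 0 := by
        have h1 := h2eval ![(1:K), 0]
        rw [hh2eq] at h1
        simp only [_root_.map_mul, _root_.map_pow, MvPolynomial.eval_C, MvPolynomial.eval_X,
          Matrix.cons_val_zero, Matrix.cons_val_one, Matrix.head_cons] at h1
        rw [zero_pow (by omega), mul_zero] at h1
        have h2' : (fun i => u i * 1 + v i * 0) = u := by funext i; ring
        rw [h2'] at h1
        exact h1.symm
      exact hu hfinal
  · have hdeg' : p.degree ≠ 0 := by
      intro h
      exact hdeg (Polynomial.natDegree_eq_zero_iff_degree_le_zero.mpr (le_of_eq h))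
    obtain ⟨t₀, ht₀⟩ := IsAlgClosed.exists_root p hdeg'
    refine ⟨fun i => u i * t₀ + v i, ?_, ?_⟩
    · intro h
      apply hv
      have : v = (-t₀) • u := by
        funext i
        have := congrFun h i
        simp only [Pi.zero_apply] at this
        simp only [Pi.smul_apply, smul_eq_mul]
        linear_combination this
      rw [this]
      exact Submodule.smul_mem _ _ (Submodule.mem_span_singleton_self u)
    · rw [← hpeval t₀]
      exact ht₀
end HZ


section Helpers
variable {K : Type*} [Field K]

lemma prime_X_mv {n : ℕ} (hn : 1 ≤ n) (i : Fin n) :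
    Prime (X i : MvPolynomial (Fin n) K) := by
  obtain ⟨m, rfl⟩ : ∃ m, n = m + 1 := ⟨n - 1, by omega⟩
  set e := (renameEquiv K (Equiv.swap i 0)).trans (MvPolynomial.finSuccEquiv K m) with he'
  have he : e (X i) = Polynomial.X := by
    rw [he']
    simp only [AlgEquiv.trans_apply, renameEquiv_apply, rename_X, Equiv.swap_apply_left]
    exact MvPolynomial.finSuccEquiv_X_zero
  have hiff := MulEquiv.prime_iff (e.toRingEquiv.toMulEquiv)
    (p := (X i : MvPolynomial (Fin (m + 1)) K))
  apply hiff.mp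
  show Prime (e (X i))
  rw [he]
  exact Polynomial.prime_X

end Helpers

section Core
variable {K R : Type*} [Field K] [IsAlgClosed K] [Ring R] [Algebra K R]
variable (𝒜 : ℕ → Submodule K R) [GradedRing 𝒜]

/-- Sikora-type theorem: existence of a singular plane. -/
lemma exists_singular_plane
    (hcomm : ∀ (i j : ℕ) (x y : R), x ∈ 𝒜 i → y ∈ 𝒜 j →
      x * y = (-1 : R) ^ (i * j) * (y * x))
    (hfin : ∀ i, FiniteDimensional K (𝒜 i))
    (hchar : (2 : K) ≠ 0)
    (ε : R →ₗ[K] K)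
    (hPD2 : ∀ x : R, x ∈ 𝒜 2 → (∀ c : 𝒜 1, ε (x * c) = 0) → x = 0)
    (hb1 : 4 ≤ finrank K (𝒜 1)) :
    ∃ a b : 𝒜 1, a ≠ 0 ∧ ((a : R) * (b : R) = 0) ∧ b ∉ Submodule.span K {a} := by
  haveI := hfin 1
  by_contra hcon
  push_neg at hcon
  -- hcon : ∀ a b, a ≠ 0 → a * b = 0 → b ∈ span {a}
  set n : ℕ := finrank K (𝒜 1) with hn
  have hn1 : 1 ≤ n := by omega
  set B : Basis (Fin n) K (𝒜 1) := Module.finBasis K (𝒜 1) with hB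
  -- anticommutativity and squares
  have hanti : ∀ x y : 𝒜 1, (x : R) * (y : R) = -((y : R) * (x : R)) := by
    intro x y
    have := hcomm 1 1 (x : R) (y : R) x.2 y.2
    simpa [pow_one, neg_one_mul] using this
  have hsq : ∀ x : 𝒜 1, (x : R) * (x : R) = 0 := by
    intro x
    have h1 := hanti x x
    have h2 : (x : R) * x + (x : R) * x = 0 := by
      nth_rewrite 1 [h1]; exact neg_add_cancel _
    have hmem : (x : R) * (x : R) ∈ 𝒜 2 := by
      have := SetLike.mul_mem_graded x.2 x.2
      norm_num at this
      exact this
    set z : 𝒜 2 := ⟨(x : R) * x, hmem⟩ with hz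
    have h3 : (2 : K) • z = 0 := by
      apply Subtype.ext
      push_cast
      rw [two_smul]
      exact h2
    rcases smul_eq_zero.mp h3 with h | h
    · exact absurd h hchar
    · have := congrArg (Subtype.val) h
      exact this
  -- expansion helpers
  have hexp : ∀ b : 𝒜 1, (b : R) = ∑ k, B.repr b k • ((B k : R)) := by
    intro b
    conv_lhs => rw [← B.sum_repr b]
    push_cast
    rfl
  have hT1 : ∀ (a : 𝒜 1) (x y : R), ε ((a : R) * x * y)
      = ∑ k, B.repr a k * ε ((B k : R) * x * y) := by
    intro a x y
    conv_lhs => rw [hexp a]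
    rw [Finset.sum_mul, Finset.sum_mul, map_sum]
    exact Finset.sum_congr rfl fun k _ => by
      rw [smul_mul_assoc, smul_mul_assoc, _root_.map_smul, smul_eq_mul]
  have hT2 : ∀ (x : R) (b : 𝒜 1) (y : R), ε (x * (b : R) * y)
      = ∑ k, B.repr b k * ε (x * (B k : R) * y) := by
    intro x b y
    conv_lhs => rw [hexp b]
    rw [Finset.mul_sum, Finset.sum_mul, map_sum]
    exact Finset.sum_congr rfl fun k _ => by
      rw [mul_smul_comm, smul_mul_assoc, _root_.map_smul, smul_eq_mul]
  have hT3 : ∀ (x : R) (c : 𝒜 1), ε (x * (c : R))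
      = ∑ k, B.repr c k * ε (x * (B k : R)) := by
    intro x c
    conv_lhs => rw [hexp c]
    rw [Finset.mul_sum, map_sum]
    exact Finset.sum_congr rfl fun k _ => by
      rw [mul_smul_comm, _root_.map_smul, smul_eq_mul]
  -- the matrix of the skew pairing
  set Ma : 𝒜 1 → Matrix (Fin n) (Fin n) K :=
    fun a i j => ε ((a : R) * (B j : R) * (B i : R)) with hMa
  have hMaV : ∀ a b : 𝒜 1, Ma a *ᵥ (B.equivFun b)
      = fun i => ε ((a : R) * (b : R) * (B i : R)) := by
    intro a b
    funext i
    show ∑ j, Ma a i j * B.equivFun b j = _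
    rw [hT2 (a : R) b ((B i : R))]
    refine Finset.sum_congr rfl fun j _ => ?_
    rw [Basis.equivFun_apply]
    ring
  have hab_iff : ∀ a b : 𝒜 1, ((a : R) * (b : R) = 0) ↔ Ma a *ᵥ B.equivFun b = 0 := by
    intro a b
    constructor
    · intro h
      rw [hMaV]
      funext i
      rw [h, zero_mul, map_zero]
      rfl
    · intro h
      rw [hMaV] at h
      apply hPD2 _ (by
        have := SetLike.mul_mem_graded a.2 b.2
        norm_num at this
        exact this)
      intro c
      rw [hT3]
      apply Finset.sum_eq_zero
      intro k _
      have := congrFun h k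
      simp only [Pi.zero_apply] at this
      rw [this, mul_zero]
  have hsqv : ∀ a : 𝒜 1, Ma a *ᵥ B.equivFun a = 0 :=
    fun a => (hab_iff a a).mp (hsq a)
  have hskew : ∀ (a : 𝒜 1) i j, Ma a j i = -(Ma a i j) := by
    intro a i j
    show ε ((a:R) * (B i : R) * (B j : R)) = -ε ((a:R) * (B j : R) * (B i : R))
    rw [mul_assoc, hanti (B i) (B j), mul_neg, ← mul_assoc, map_neg]
  have hker : ∀ a : 𝒜 1, a ≠ 0 → ∀ v, Ma a *ᵥ v = 0 → ∃ c : K, v = c • B.equivFun a := by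
    intro a ha v hv
    set b : 𝒜 1 := B.equivFun.symm v with hb'
    have hvb : B.equivFun b = v := B.equivFun.apply_symm_apply v
    have hab : (a : R) * (b : R) = 0 := (hab_iff a b).mpr (by rw [hvb]; exact hv)
    obtain ⟨c, hc⟩ := Submodule.mem_span_singleton.mp (hcon a b ha hab)
    exact ⟨c, by rw [← hvb, ← hc]; exact _root_.map_smul B.equivFun c a⟩
  have hequivne : ∀ a : 𝒜 1, a ≠ 0 → B.equivFun a ≠ 0 := by
    intro a ha h
    apply ha
    have := congrArg B.equivFun.symm h
    rw [B.equivFun.symm_apply_apply] at this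
    simpa using this
  have hadj_ne : ∀ a : 𝒜 1, a ≠ 0 → adjugate (Ma a) ≠ 0 := by
    intro a ha
    exact adjugate_ne_zero_of_ker_le_line hn1 (Ma a) (B.equivFun a) (hequivne a ha) (hker a ha)
  have hdet0 : ∀ a : 𝒜 1, a ≠ 0 → (Ma a).det = 0 := by
    intro a ha
    exact (Matrix.exists_mulVec_eq_zero_iff).mp ⟨B.equivFun a, hequivne a ha, hsqv a⟩
  have hcols : ∀ a : 𝒜 1, a ≠ 0 →
      ∃ w : Fin n → K, ∀ i j, adjugate (Ma a) i j = B.equivFun a i * w j := by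
    intro a ha
    have hcol : ∀ j, Ma a *ᵥ (fun i => adjugate (Ma a) i j) = 0 := by
      intro j
      funext i
      show ∑ k, Ma a i k * adjugate (Ma a) k j = 0
      have := congrFun (congrFun (Matrix.mul_adjugate (Ma a)) i) j
      rw [Matrix.mul_apply] at this
      rw [this, hdet0 a ha]
      simp
    choose w hw using fun j => hker a ha _ (hcol j)
    refine ⟨w, fun i j => ?_⟩
    have := congrFun (hw j) i
    simp only [Pi.smul_apply, smul_eq_mul] at this
    rw [this]; ring
  have htrans : ∀ a : 𝒜 1, (adjugate (Ma a))ᵀ = ((-1 : K) ^ (n - 1)) • adjugate (Ma a) := by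
    intro a
    have h1 : (Ma a)ᵀ = (-1 : K) • Ma a := by
      funext i j
      rw [Matrix.transpose_apply, hskew a]
      simp
    rw [Matrix.adjugate_transpose, h1, Matrix.adjugate_smul]
    simp
  -- even / odd split
  rcases Nat.even_or_odd n with hpar | hpar
  · -- even case : contradiction immediately
    set a₀ : 𝒜 1 := B ⟨0, by omega⟩ with ha₀def
    have ha₀ : a₀ ≠ 0 := B.ne_zero _
    obtain ⟨w, hw⟩ := hcols a₀ ha₀
    set u := B.equivFun a₀ with hu
    obtain ⟨i₀, hi₀⟩ := Function.ne_iff.mp (hequivne a₀ ha₀)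
    have hsign : ((-1 : K) ^ (n - 1)) = -1 := by
      apply Odd.neg_one_pow
      rcases hpar with ⟨m, hm⟩
      exact ⟨m - 1, by omega⟩
    have hrel : ∀ i j, u j * w i = -(u i * w j) := by
      intro i j
      have := congrFun (congrFun (htrans a₀) i) j
      rw [Matrix.transpose_apply, Matrix.smul_apply, smul_eq_mul, hsign, hw j i, hw i j] at this
      rw [this]; ring
    have hwi₀ : w i₀ = 0 := by
      have := hrel i₀ i₀
      have h2 : (2 : K) * (u i₀ * w i₀) = 0 := by linear_combination this
      rcases mul_eq_zero.mp h2 with h | h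
      · exact absurd h hchar
      · rcases mul_eq_zero.mp h with h' | h'
        · exact absurd h' hi₀
        · exact h'
    have hwall : ∀ j, w j = 0 := by
      intro j
      have := hrel j i₀
      rw [hwi₀, mul_zero] at this
      have h2 : u i₀ * w j = 0 := by linear_combination this
      rcases mul_eq_zero.mp h2 with h | h
      · exact absurd h hi₀
      · exact h
    apply hadj_ne a₀ ha₀
    funext i j
    rw [hw i j, hwall j, mul_zero]
    rfl
  · -- odd case
    have hn5 : 5 ≤ n := by
      rcases hpar with ⟨m, hm⟩
      omega
    have hsign : ((-1 : K) ^ (n - 1)) = 1 := by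
      apply Even.neg_one_pow
      rcases hpar with ⟨m, hm⟩
      exact ⟨m, by omega⟩
    have hsym : ∀ a : 𝒜 1, ∀ i j, adjugate (Ma a) j i = adjugate (Ma a) i j := by
      intro a i j
      have := congrFun (congrFun (htrans a) i) j
      rw [Matrix.transpose_apply, Matrix.smul_apply, smul_eq_mul, hsign, one_mul] at this
      exact this
    have hlam : ∀ a : 𝒜 1, a ≠ 0 → ∃ lam : K, lam ≠ 0 ∧
        ∀ i j, adjugate (Ma a) i j = lam * (B.equivFun a i * B.equivFun a j) := by
      intro a ha
      obtain ⟨w, hw⟩ := hcols a ha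
      set u := B.equivFun a with hu
      obtain ⟨i₀, hi₀⟩ := Function.ne_iff.mp (hequivne a ha)
      have hrel : ∀ i j, u j * w i = u i * w j := by
        intro i j
        have := congrFun (congrFun (htrans a) i) j
        rw [Matrix.transpose_apply, Matrix.smul_apply, smul_eq_mul, hsign, one_mul,
          hw j i, hw i j] at this
        exact this
      set lam := w i₀ / u i₀ with hlamdef
      have hwj : ∀ j, w j = lam * u j := by
        intro j
        have h := hrel i₀ j
        rw [hlamdef, div_mul_eq_mul_div, eq_div_iff hi₀]
        linear_combination -h
      refine ⟨lam, ?_, fun i j => by rw [hw i j, hwj j]; ring⟩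
      intro h0
      apply hadj_ne a ha
      funext i j
      rw [hw i j, hwj j, h0]
      simp
    -- polynomial matrix
    set 𝕄 : Matrix (Fin n) (Fin n) (MvPolynomial (Fin n) K) :=
      fun i j => ∑ k, MvPolynomial.C (ε ((B k : R) * (B j : R) * (B i : R))) * X k with h𝕄
    have hhomM : ∀ i j, (𝕄 i j).IsHomogeneous 1 := by
      intro i j
      exact MvPolynomial.IsHomogeneous.sum _ _ _ fun k _ => isHomogeneous_C_mul_X _ _
    have heval𝕄 : ∀ a : 𝒜 1, 𝕄.map (eval (B.equivFun a)) = Ma a := by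
      intro a
      funext i j
      show eval (B.equivFun a) (∑ k, MvPolynomial.C (ε ((B k : R) * (B j : R) * (B i : R))) * X k)
        = ε ((a : R) * (B j : R) * (B i : R))
      rw [_root_.map_sum, hT1 a]
      refine Finset.sum_congr rfl fun k _ => ?_
      rw [_root_.map_mul, eval_C, eval_X, Basis.equivFun_apply]
      ring
    have hadjeval : ∀ a : 𝒜 1, adjugate (Ma a) = (adjugate 𝕄).map (eval (B.equivFun a)) := by
      intro a
      rw [← heval𝕄 a]
      have := RingHom.map_adjugate (eval (B.equivFun a) : MvPolynomial (Fin n) K →+* K) 𝕄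
      rw [RingHom.mapMatrix_apply, RingHom.mapMatrix_apply] at this
      exact this.symm
    have hAhom : ∀ i j, ((adjugate 𝕄) i j).IsHomogeneous (n - 1) :=
      fun i j => adjugate_entry_isHomogeneous 𝕄 hhomM i j
    -- the key polynomial identity
    have hPij : ∀ i j : Fin n, adjugate 𝕄 i i * (X j) ^ 2 = adjugate 𝕄 j j * (X i) ^ 2 := by
      intro i j
      apply MvPolynomial.funext
      intro x
      rw [_root_.map_mul, _root_.map_mul, _root_.map_pow, _root_.map_pow, eval_X, eval_X]
      by_cases hx0 : x = 0
      · subst hx0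
        simp [zero_pow]
      · set a : 𝒜 1 := B.equivFun.symm x with ha'
        have hxa : B.equivFun a = x := B.equivFun.apply_symm_apply x
        have ha : a ≠ 0 := by
          intro h
          apply hx0
          rw [← hxa, h, map_zero]
        obtain ⟨lam, hlam0, hl⟩ := hlam a ha
        have hev : ∀ i' j', eval x (adjugate 𝕄 i' j') = lam * (x i' * x j') := by
          intro i' j'
          have := congrFun (congrFun (hadjeval a) i') j'
          rw [Matrix.map_apply, hxa] at this
          rw [← this, hl i' j', hxa]
        rw [hev i i, hev j j]
        ring
    -- extract the common factor Q
    have hXne : ∀ i : Fin n, (X i : MvPolynomial (Fin n) K) ≠ 0 := fun i => X_ne_zero i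
    have hXsqne : ∀ i : Fin n, ((X i : MvPolynomial (Fin n) K)) ^ 2 ≠ 0 :=
      fun i => pow_ne_zero 2 (hXne i)
    set i0 : Fin n := ⟨0, by omega⟩ with hi0def
    set i1 : Fin n := ⟨1, by omega⟩ with hi1def
    have hne01 : i0 ≠ i1 := by
      intro h; rw [hi0def, hi1def] at h
      exact absurd (congrArg Fin.val h) (by norm_num)
    have hprime : Prime (X i0 : MvPolynomial (Fin n) K) := prime_X_mv hn1 i0
    have hXdvd : ¬ (X i0 : MvPolynomial (Fin n) K) ∣ X i1 := by
      intro ⟨g, hg⟩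
      have := congrArg (eval (fun k => if k = i1 then (1:K) else 0)) hg
      rw [_root_.map_mul] at this
      simp only [eval_X] at this
      simp [hne01] at this
    obtain ⟨Q, hQ0eq, hQ1eq⟩ : ∃ Q, adjugate 𝕄 i0 i0 = (X i0) ^ 2 * Q ∧
        adjugate 𝕄 i1 i1 = (X i1) ^ 2 * Q := by
      have hkey := hPij i0 i1
      have hd1 : (X i0 : MvPolynomial (Fin n) K) ∣ adjugate 𝕄 i0 i0 := by
        have hdvd : (X i0 : MvPolynomial (Fin n) K) ∣ adjugate 𝕄 i0 i0 * (X i1)^2 :=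
          ⟨adjugate 𝕄 i1 i1 * X i0, by rw [hkey]; ring⟩
        rcases hprime.2.2 _ _ (by rwa [pow_two, ← mul_assoc] at hdvd;) with h | h
        · rcases hprime.2.2 _ _ h with h' | h'
          · exact h'
          · exact absurd h' hXdvd
        · exact absurd h hXdvd
      obtain ⟨g1, hg1⟩ := hd1
      have hg1key : g1 * (X i1)^2 = adjugate 𝕄 i1 i1 * X i0 := by
        apply mul_left_cancel₀ (hXne i0)
        rw [← mul_assoc, ← hg1]
        rw [hkey]; ring
      have hd2 : (X i0 : MvPolynomial (Fin n) K) ∣ g1 := by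
        have hdvd : (X i0 : MvPolynomial (Fin n) K) ∣ g1 * (X i1)^2 :=
          ⟨adjugate 𝕄 i1 i1, by rw [hg1key]; ring⟩
        rcases hprime.2.2 _ _ (by rwa [pow_two, ← mul_assoc] at hdvd) with h | h
        · rcases hprime.2.2 _ _ h with h' | h'
          · exact h'
          · exact absurd h' hXdvd
        · exact absurd h hXdvd
      obtain ⟨Q, hQ⟩ := hd2
      refine ⟨Q, by rw [hg1, hQ]; ring, ?_⟩
      apply mul_left_cancel₀ (hXne i0)
      linear_combination (X i1 : MvPolynomial (Fin n) K) ^ 2 * hQ - hg1key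
    have hQall : ∀ i : Fin n, adjugate 𝕄 i i = (X i) ^ 2 * Q := by
      intro i
      apply mul_right_cancel₀ (hXsqne i0)
      rw [hPij i i0, hQ0eq]; ring
    -- Q is nonzero
    have hQ0 : Q ≠ 0 := by
      intro h0
      set a₀ : 𝒜 1 := B i0 with ha₀def
      have ha₀ : a₀ ≠ 0 := B.ne_zero _
      obtain ⟨lam, hlam0, hl⟩ := hlam a₀ ha₀
      have hu : B.equivFun a₀ i0 = 1 := by
        simp [ha₀def, Basis.equivFun_self]
      have hev : eval (B.equivFun a₀) (adjugate 𝕄 i0 i0) = lam := by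
        have := congrFun (congrFun (hadjeval a₀) i0) i0
        rw [Matrix.map_apply] at this
        rw [← this, hl i0 i0, hu]
        ring
      rw [hQall i0, h0, mul_zero, map_zero] at hev
      exact hlam0 hev.symm
    -- Q is homogeneous of degree n - 3
    have hQhom : Q.IsHomogeneous (n - 3) := by
      have hX2 : ((X i0 : MvPolynomial (Fin n) K) ^ 2).IsHomogeneous 2 := by
        have := (isHomogeneous_X K i0).pow 2
        simpa using this
      apply isHomogeneous_of_mul_left hX2 (hXsqne i0)
      have : 2 + (n - 3) = n - 1 := by omega
      rw [this, ← hQall i0]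
      exact hAhom i0 i0
    -- find a nontrivial zero of Q
    obtain ⟨x, hx0, hxQ⟩ := exists_nontrivial_zero (by omega) (by omega) Q hQhom
    set a : 𝒜 1 := B.equivFun.symm x with ha'
    have hxa : B.equivFun a = x := B.equivFun.apply_symm_apply x
    have ha : a ≠ 0 := by
      intro h
      apply hx0
      rw [← hxa, h, map_zero]
    obtain ⟨lam, hlam0, hl⟩ := hlam a ha
    obtain ⟨i, hi'⟩ := Function.ne_iff.mp hx0
    have hi : x i ≠ 0 := by simpa using hi' 
    have hev : eval x (adjugate 𝕄 i i) = lam * (x i * x i) := by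
      have := congrFun (congrFun (hadjeval a) i) i
      rw [Matrix.map_apply, hxa] at this
      rw [← this, hl i i, hxa]
    rw [hQall i, _root_.map_mul, _root_.map_pow, eval_X, hxQ, mul_zero] at hev
    rcases mul_eq_zero.mp hev.symm with h | h
    · exact hlam0 h
    · rcases mul_eq_zero.mp h with h' | h'
      · exact hi h'
      · exact hi h'
end Core

set_option maxHeartbeats 1000000

/-- Let `A` be a `PD_3` algebra over an algebraically closed field of
characteristic ≠ 2 with `dim A^1 ≥ 4`, and let `ν` be the nullity of `μ_A` (the maximal
dimension of a 2-singular subspace of `A^1`).  Then `ν ≥ 2` and `R^1_{ν-1}(A)` contains a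
linear subspace of dimension `ν`. -/
theorem pd3_nullity_bound_on_resonance
    {K R : Type*} [Field K] [IsAlgClosed K] [Ring R] [Algebra K R]
    (𝒜 : ℕ → Submodule K R) [GradedRing 𝒜]
    (hcomm : ∀ (i j : ℕ) (x y : R), x ∈ 𝒜 i → y ∈ 𝒜 j →
      x * y = (-1 : R) ^ (i * j) * (y * x))
    (hconn : ∀ x ∈ 𝒜 0, ∃ c : K, x = algebraMap K R c)
    (hfin : ∀ i, FiniteDimensional K (𝒜 i))
    (hchar : (2 : K) ≠ 0)
    (ε : R →ₗ[K] K)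
    (hPD : ∀ (i : ℕ) (x : R), x ∈ 𝒜 i →
      (∀ (j : ℕ) (y : R), y ∈ 𝒜 j → i + j = 3 → ε (x * y) = 0) → x = 0)
    (hb1 : 4 ≤ finrank K (𝒜 1))
    (ν : ℕ)
    (hν_exists : ∃ U : Submodule K R, U ≤ 𝒜 1 ∧ finrank K U = ν ∧
      ∀ a ∈ U, ∀ b ∈ U, ∀ c ∈ 𝒜 1, ε (a * b * c) = 0)
    (hν_max : ∀ U : Submodule K R, U ≤ 𝒜 1 →
      (∀ a ∈ U, ∀ b ∈ U, ∀ c ∈ 𝒜 1, ε (a * b * c) = 0) → finrank K U ≤ ν) :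
    2 ≤ ν ∧ ∃ U : Submodule K R, U ≤ 𝒜 1 ∧ finrank K U = ν ∧
      ∀ a : 𝒜 1, (a : R) ∈ U → a ∈ resSet 𝒜 1 (ν - 1) := by
    classical
  have hPD2 : ∀ x : R, x ∈ 𝒜 2 → (∀ c : 𝒜 1, ε (x * c) = 0) → x = 0 := by
    intro x hx h
    apply hPD 2 x hx
    intro j y hy hj
    have hj1 : j = 1 := by omega
    subst hj1
    exact h ⟨y, hy⟩
  haveI := hfin 1
  have hanti : ∀ x y : 𝒜 1, (x : R) * (y : R) = -((y : R) * (x : R)) := by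
    intro x y
    have := hcomm 1 1 (x : R) (y : R) x.2 y.2
    simpa [pow_one, neg_one_mul] using this
  have hsq : ∀ x : 𝒜 1, (x : R) * (x : R) = 0 := by
    intro x
    have h1 := hanti x x
    have h2 : (x : R) * x + (x : R) * x = 0 := by
      nth_rewrite 1 [h1]; exact neg_add_cancel _
    have hmem : (x : R) * (x : R) ∈ 𝒜 2 := by
      have := SetLike.mul_mem_graded x.2 x.2
      norm_num at this
      exact this
    set z : 𝒜 2 := ⟨(x : R) * x, hmem⟩ with hz
    have h3 : (2 : K) • z = 0 := by
      apply Subtype.ext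
      push_cast
      rw [two_smul]
      exact h2
    rcases smul_eq_zero.mp h3 with h | h
    · exact absurd h hchar
    · have := congrArg (Subtype.val) h
      exact this
  obtain ⟨a, b, ha, hab, hbspan⟩ := exists_singular_plane 𝒜 hcomm hfin hchar ε hPD2 hb1
  have hba : (b : R) * (a : R) = 0 := by rw [hanti b a, hab, neg_zero]
  have hAA : (a : R) * (a : R) = 0 := hsq a
  have hBB : (b : R) * (b : R) = 0 := hsq b
  set U₂ : Submodule K R := Submodule.span K {(b : R), (a : R)} with hU₂
  have hU₂le : U₂ ≤ 𝒜 1 := by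
    rw [hU₂, Submodule.span_le]
    rw [Set.insert_subset_iff]
    exact ⟨b.2, Set.singleton_subset_iff.mpr a.2⟩
  have hprod : ∀ x ∈ U₂, ∀ y ∈ U₂, x * y = 0 := by
    intro x hx y hy
    obtain ⟨c1, c2, hxe⟩ := Submodule.mem_span_pair.mp hx
    obtain ⟨d1, d2, hye⟩ := Submodule.mem_span_pair.mp hy
    rw [← hxe, ← hye]
    simp only [add_mul, mul_add, smul_mul_assoc, mul_smul_comm, hAA, hBB, hab, hba,
      smul_zero, add_zero, zero_add]
  have hεU₂ : ∀ x ∈ U₂, ∀ y ∈ U₂, ∀ c ∈ 𝒜 1, ε (x * y * c) = 0 := by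
    intro x hx y hy c hc
    rw [hprod x hx y hy, zero_mul, map_zero]
  have hfinrankU₂ : finrank K U₂ = 2 := by
    have hli : LinearIndependent K ![b, a] := by
      rw [linearIndependent_fin2]
      simp only [Matrix.cons_val_one, Matrix.head_cons, Matrix.cons_val_zero]
      refine ⟨ha, fun c hc => hbspan ?_⟩
      exact hc ▸ Submodule.smul_mem _ c (Submodule.mem_span_singleton_self a)
    have hliR : LinearIndependent K ![(b : R), (a : R)] := by
      have hcomp : ![(b : R), (a : R)] = ((𝒜 1).subtype) ∘ ![b, a] := by
        funext i; fin_cases i <;> rfl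
      rw [hcomp]
      exact hli.map' (𝒜 1).subtype (Submodule.ker_subtype _)
    have hc := finrank_span_eq_card hliR
    have hrange : Set.range ![(b : R), (a : R)] = {(b : R), (a : R)} := by
      ext x
      simp [Matrix.range_cons, Matrix.range_empty, or_comm]
    rw [hrange] at hc
    rw [hU₂, hc]
    simp
  have hν2 : 2 ≤ ν := hfinrankU₂ ▸ hν_max U₂ hU₂le hεU₂
  refine ⟨hν2, ?_⟩
  obtain ⟨U, hUle, hUrank, hUsing⟩ := hν_exists
  refine ⟨U, hUle, hUrank, ?_⟩
  intro a' ha'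
  show (ν - 1) ≤ hdim 𝒜 a' 1
  have hδ0 : finrank K (LinearMap.range (gdelta 𝒜 a' 0)) ≤ 1 := by
    haveI := hfin 0
    refine le_trans (LinearMap.finrank_range_le _) ?_
    refine finrank_le_one ⟨(1 : R), SetLike.one_mem_graded 𝒜⟩ ?_
    intro w
    obtain ⟨c, hcw⟩ := hconn (w : R) w.2
    refine ⟨c, Subtype.ext ?_⟩
    show c • (1 : R) = (w : R)
    rw [hcw, Algebra.algebraMap_eq_smul_one]
  have hkerb : ν ≤ finrank K (LinearMap.ker (gdelta 𝒜 a' 1)) := by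
    have hle : Submodule.comap (𝒜 1).subtype U ≤ LinearMap.ker (gdelta 𝒜 a' 1) := by
      intro u hu
      rw [LinearMap.mem_ker]
      apply Subtype.ext
      show (a' : R) * (u : R) = 0
      apply hPD2
      · have := SetLike.mul_mem_graded a'.2 u.2
        norm_num at this
        exact this
      · intro c
        exact hUsing (a' : R) ha' (u : R) hu (c : R) c.2
    calc ν = finrank K U := hUrank.symm
      _ = finrank K (Submodule.comap (𝒜 1).subtype U) :=
          (Submodule.comapSubtypeEquivOfLe hUle).finrank_eq.symm
      _ ≤ finrank K (LinearMap.ker (gdelta 𝒜 a' 1)) := Submodule.finrank_mono hle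
  have hdef : hdim 𝒜 a' 1 = finrank K (LinearMap.ker (gdelta 𝒜 a' 1))
      - finrank K (LinearMap.range (gdelta 𝒜 a' 0)) := rfl
  rw [hdef]
  omega
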